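/- Let P be an orthogonal projection and U a unitary operator on a complex Hilbert space, and set T = P - U*PU. Then ker(T + 1) = U* (ker(P U* P + (1 - P))), i.e., φ satisfies Tφ = -φ if and only if Uφ lies in the kernel of P U* P + (1 - P). -/

import Mathlib

/-- For T = P - U*PU: Tφ = -φ iff Uφ ∈ ker(P U* P + (1 - P)), and
ker(T + 1) = U* (ker(P U* P + (1 - P))). -/
theorem stmt_5 {H : Type*} [NormedAddCommGroup H] [InnerProductSpace ℂ H] [CompleteSpace H]
    (P U : H →L[ℂ] H)
    (hP : ContinuousLinearMap.adjoint P = P) (hP2 : P * P = P)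
    (hU1 : ContinuousLinearMap.adjoint U * U = 1) (hU2 : U * ContinuousLinearMap.adjoint U = 1) :
    (∀ φ : H, (P - ContinuousLinearMap.adjoint U * P * U) φ = -φ ↔
        (P * ContinuousLinearMap.adjoint U * P + (1 - P)) (U φ) = 0) ∧
    LinearMap.ker (((P - ContinuousLinearMap.adjoint U * P * U) + 1 : H →L[ℂ] H) : H →ₗ[ℂ] H) =
      Submodule.map (ContinuousLinearMap.adjoint U : H →ₗ[ℂ] H)
        (LinearMap.ker ((P * ContinuousLinearMap.adjoint U * P + (1 - P) : H →L[ℂ] H) : H →ₗ[ℂ] H)) := by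
  set U' := ContinuousLinearMap.adjoint U with hU'
  have hUU' : ∀ x, U (U' x) = x := fun x => by
    have := congrArg (fun A : H →L[ℂ] H => A x) hU2
    simpa [ContinuousLinearMap.mul_apply] using this
  have hU'U : ∀ x, U' (U x) = x := fun x => by
    have := congrArg (fun A : H →L[ℂ] H => A x) hU1
    simpa [ContinuousLinearMap.mul_apply] using this
  have hPP : ∀ x, P (P x) = P x := fun x => by
    have := congrArg (fun A : H →L[ℂ] H => A x) hP2
    simpa [ContinuousLinearMap.mul_apply] using this
  have hself : ∀ x : H, (inner ℂ x x : ℂ) = (‖x‖ : ℂ) ^ 2 := fun x => by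
    exact_mod_cast inner_self_eq_norm_sq_to_K (𝕜 := ℂ) x
  have hPadj : ∀ x y : H, (inner ℂ (P x) y : ℂ) = (inner ℂ x (P y) : ℂ) := fun x y => by
    conv_lhs => rw [← hP]
    exact ContinuousLinearMap.adjoint_inner_left P y x
  have hPnorm : ∀ x : H, (inner ℂ (P x) x : ℂ) = (‖P x‖ : ℂ) ^ 2 := fun x => by
    conv_lhs => rw [← hPP x, hPadj]
    exact hself (P x)
  have hUnorm : ∀ x : H, ‖U x‖ = ‖x‖ := fun x => by
    have h1 : (inner ℂ (U x) (U x) : ℂ) = (inner ℂ x x : ℂ) := by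
      rw [← ContinuousLinearMap.adjoint_inner_right U, ← hU', hU'U]
    rw [hself, hself] at h1
    have h3 : (‖U x‖ : ℝ) ^ 2 = (‖x‖ : ℝ) ^ 2 := by exact_mod_cast h1
    nlinarith [norm_nonneg (U x), norm_nonneg x]
  have key : ∀ φ : H, (P - U' * P * U) φ = -φ ↔ (P φ = 0 ∧ P (U φ) = U φ) := by
    intro φ
    constructor
    · intro h
      simp only [ContinuousLinearMap.sub_apply, ContinuousLinearMap.mul_apply] at h
      have h1 : U' (P (U φ)) = P φ + φ := by
        have := congrArg (fun z => P φ - z) h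
        simpa [sub_sub_cancel, sub_neg_eq_add] using this
      have h2 : (inner ℂ (U' (P (U φ))) φ : ℂ) = (inner ℂ (P φ) φ : ℂ) + (inner ℂ φ φ : ℂ) := by
        rw [h1, inner_add_left]
      have h3 : (inner ℂ (U' (P (U φ))) φ : ℂ) = (‖P (U φ)‖ : ℂ) ^ 2 := by
        rw [hU', ContinuousLinearMap.adjoint_inner_left]
        exact hPnorm (U φ)
      have h4 : ((‖P (U φ)‖ : ℂ)) ^ 2 = (‖P φ‖ : ℂ) ^ 2 + (‖φ‖ : ℂ) ^ 2 := by
        rw [← h3, h2, hPnorm, hself]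
      have h5 : (‖P (U φ)‖ : ℝ) ^ 2 = (‖P φ‖ : ℝ) ^ 2 + (‖φ‖ : ℝ) ^ 2 := by
        exact_mod_cast h4
      have hval : ‖((‖P (U φ)‖ : ℂ)) ^ 2‖ = ‖P (U φ)‖ ^ 2 := by
        rw [norm_pow]
        congr 1
        simp [abs_of_nonneg] --  (norm_nonneg (P (U φ)))
      have hle : ‖P (U φ)‖ ≤ ‖U φ‖ := by
        by_cases hz : P (U φ) = 0
        · simp [hz]
        · have hc : ‖(inner ℂ (P (U φ)) (U φ) : ℂ)‖ ≤ ‖P (U φ)‖ * ‖U φ‖ :=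
            norm_inner_le_norm _ _
          rw [hPnorm, hval] at hc
          have hpos : 0 < ‖P (U φ)‖ := norm_pos_iff.mpr hz
          nlinarith
      have hUn := hUnorm φ
      have hPφ0 : P φ = 0 := by
        have h6 : ‖P φ‖ ^ 2 ≤ 0 := by nlinarith [norm_nonneg (P (U φ)), norm_nonneg (U φ)]
        have h7 : ‖P φ‖ = 0 := by nlinarith [norm_nonneg (P φ)]
        simpa using h7
      have hnψ : (‖P (U φ)‖ : ℝ) ^ 2 = (‖U φ‖ : ℝ) ^ 2 := by
        rw [hUn]
        simp only [hPφ0, norm_zero] at h5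
        linarith
      have hPψ : P (U φ) = U φ := by
        have hcast : ((‖P (U φ)‖ : ℂ)) ^ 2 = ((‖U φ‖ : ℂ)) ^ 2 := by exact_mod_cast hnψ
        have hd : (inner ℂ (U φ - P (U φ)) (U φ - P (U φ)) : ℂ) = 0 := by
          have e2 : (inner ℂ (U φ) (P (U φ)) : ℂ) = (‖P (U φ)‖ : ℂ) ^ 2 := by
            rw [← inner_conj_symm, hPnorm, ← Complex.ofReal_pow, Complex.conj_ofReal,
              Complex.ofReal_pow]
          rw [inner_sub_left, inner_sub_right, inner_sub_right, hPnorm, e2, hself, hself, hcast]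
          ring
        have h8 := inner_self_eq_zero.mp hd
        have h9 := sub_eq_zero.mp h8
        exact h9.symm
      exact ⟨hPφ0, hPψ⟩
    · rintro ⟨h1, h2⟩
      simp only [ContinuousLinearMap.sub_apply, ContinuousLinearMap.mul_apply, h1, h2, hU'U]
      abel
  have key2 : ∀ ψ : H, (P * U' * P + (1 - P)) ψ = 0 ↔ (P (U' ψ) = 0 ∧ P ψ = ψ) := by
    intro ψ
    simp only [ContinuousLinearMap.add_apply, ContinuousLinearMap.mul_apply,
      ContinuousLinearMap.sub_apply, ContinuousLinearMap.one_apply]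
    constructor
    · intro h
      have hp := congrArg P h
      simp only [map_add, map_sub, hPP, map_zero] at hp
      have hp1 : P (U' (P ψ)) = 0 := by
        have e : P (U' (P ψ)) + (P ψ - P ψ) = P (U' (P ψ)) := by abel
        rw [e] at hp
        exact hp
      have hp2 : P ψ = ψ := by
        rw [hp1] at h
        have e : ψ - P ψ = 0 := by simpa using h
        exact (sub_eq_zero.mp e).symm
      refine ⟨?_, hp2⟩
      rw [← hp2]
      exact hp1
    · rintro ⟨h1, h2⟩
      rw [h2, h1]
      simp
  have main : ∀ φ : H, (P - U' * P * U) φ = -φ ↔ (P * U' * P + (1 - P)) (U φ) = 0 := by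
    intro φ
    rw [key, key2, hU'U]
  refine ⟨main, ?_⟩
  ext φ
  simp only [LinearMap.mem_ker, Submodule.mem_map, ContinuousLinearMap.add_apply,
    ContinuousLinearMap.one_apply, ContinuousLinearMap.coe_coe]
  constructor
  · intro h
    have hT : (P - U' * P * U) φ = -φ := by
      rwa [add_eq_zero_iff_eq_neg] at h
    exact ⟨U φ, (main φ).mp hT, hU'U φ⟩
  · rintro ⟨ψ, hψ, rfl⟩
    have hm : (P - U' * P * U) (U' ψ) = -(U' ψ) := by
      apply (main (U' ψ)).mpr
      rw [hUU']
      exact hψ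
    rw [hm]
    abel
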